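/- For all real numbers a and b, the integral over ℝ of x·Φ(a+bx)·φ(x) dx equals (b/√(1+b²))·φ(a/√(1+b²)). -/

import Mathlib

open Real MeasureTheory

/-- The standard normal probability density function. -/
noncomputable def stdNormalPDF (x : ℝ) : ℝ := Real.exp (-x ^ 2 / 2) / Real.sqrt (2 * Real.pi)

/-- The standard normal cumulative distribution function. -/
noncomputable def stdNormalCDF (t : ℝ) : ℝ := ∫ s in Set.Iic t, stdNormalPDF s

open Filter Topology Set

lemma pdf_eq : stdNormalPDF = fun x => Real.exp (-(1/2) * x ^ 2) / Real.sqrt (2 * Real.pi) := by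
  funext x; rw [stdNormalPDF]; ring_nf

lemma pdf_continuous : Continuous stdNormalPDF := by
  unfold stdNormalPDF
  exact (Real.continuous_exp.comp (by continuity)).div_const _

lemma pdf_nonneg (x : ℝ) : 0 ≤ stdNormalPDF x :=
  div_nonneg (Real.exp_pos _).le (Real.sqrt_nonneg _)

lemma pdf_integrable : Integrable stdNormalPDF := by
  rw [pdf_eq]
  exact (integrable_exp_neg_mul_sq (by norm_num : (0:ℝ) < 1/2)).div_const _

lemma integral_pdf : ∫ x, stdNormalPDF x = 1 := by
  rw [pdf_eq]
  rw [integral_div, integral_gaussian]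
  rw [show Real.pi / (1/2) = 2 * Real.pi by ring]
  rw [div_self]
  positivity

lemma hasDerivAt_pdf (x : ℝ) : HasDerivAt stdNormalPDF (-x * stdNormalPDF x) x := by
  have h1 : HasDerivAt (fun y : ℝ => -y ^ 2 / 2) (-x) x := by
    have := ((hasDerivAt_pow 2 x).neg).div_const 2
    refine this.congr_deriv ?_
    norm_num
    ring
  have h2 := (h1.exp).div_const (Real.sqrt (2 * Real.pi))
  unfold stdNormalPDF
  refine h2.congr_deriv ?_
  ring

lemma sq_tendsto_atBot : Tendsto (fun x : ℝ => x ^ 2) atBot atTop := by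
  have : (fun x : ℝ => x ^ 2) = fun x => |x| ^ 2 := by funext x; rw [sq_abs]
  rw [this]
  exact (tendsto_pow_atTop two_ne_zero).comp tendsto_abs_atBot_atTop

lemma pdf_tendsto_atTop : Tendsto stdNormalPDF atTop (𝓝 0) := by
  rw [pdf_eq]
  have h : Tendsto (fun x : ℝ => -(1/2) * x ^ 2) atTop atBot := by
    apply Tendsto.const_mul_atTop_of_neg (by norm_num : (-(1/2) : ℝ) < 0)
    exact tendsto_pow_atTop two_ne_zero
  simpa using (Real.tendsto_exp_atBot.comp h).div_const (Real.sqrt (2 * Real.pi))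

lemma pdf_tendsto_atBot : Tendsto stdNormalPDF atBot (𝓝 0) := by
  rw [pdf_eq]
  have h : Tendsto (fun x : ℝ => -(1/2) * x ^ 2) atBot atBot := by
    apply Tendsto.const_mul_atTop_of_neg (by norm_num : (-(1/2) : ℝ) < 0)
    exact sq_tendsto_atBot
  simpa using (Real.tendsto_exp_atBot.comp h).div_const (Real.sqrt (2 * Real.pi))

lemma cdf_nonneg (t : ℝ) : 0 ≤ stdNormalCDF t :=
  setIntegral_nonneg measurableSet_Iic fun x _ => pdf_nonneg x

lemma cdf_le_one (t : ℝ) : stdNormalCDF t ≤ 1 := by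
  rw [stdNormalCDF, ← integral_pdf]
  exact setIntegral_le_integral pdf_integrable (ae_of_all _ pdf_nonneg)

lemma hasDerivAt_cdf (t : ℝ) : HasDerivAt stdNormalCDF (stdNormalPDF t) t := by
  have heq : stdNormalCDF = fun u => stdNormalCDF 0 + ∫ x in (0:ℝ)..u, stdNormalPDF x := by
    funext u
    rw [← intervalIntegral.integral_Iic_sub_Iic pdf_integrable.integrableOn pdf_integrable.integrableOn]
    rw [stdNormalCDF, stdNormalCDF]; ring
  rw [heq]
  exact (intervalIntegral.integral_hasDerivAt_right
    pdf_integrable.intervalIntegrable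
    pdf_continuous.aestronglyMeasurable.stronglyMeasurableAtFilter
    pdf_continuous.continuousAt).const_add _

lemma cdf_continuous : Continuous stdNormalCDF :=
  continuous_iff_continuousAt.2 fun t => (hasDerivAt_cdf t).continuousAt

lemma cdf_tendsto_atTop : Tendsto stdNormalCDF atTop (𝓝 1) := by
  have := (aecover_Iic (tendsto_id (α := ℝ) (x := atTop))).integral_tendsto_of_countably_generated
    pdf_integrable
  rwa [integral_pdf] at this

lemma cdf_tendsto_atBot : Tendsto stdNormalCDF atBot (𝓝 0) := by
  have h : Tendsto (fun t : ℝ => ∫ x in Ioi t, stdNormalPDF x) atBot (𝓝 1) := by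
    have := (aecover_Ioi (tendsto_id (α := ℝ) (x := atBot))).integral_tendsto_of_countably_generated
      pdf_integrable
    rwa [integral_pdf] at this
  have heq : stdNormalCDF = fun t => 1 - ∫ x in Ioi t, stdNormalPDF x := by
    funext t
    have := intervalIntegral.integral_Iic_add_Ioi (b := t) pdf_integrable.integrableOn pdf_integrable.integrableOn
    rw [integral_pdf] at this
    rw [stdNormalCDF]; linarith
  rw [heq]
  simpa using (tendsto_const_nhds (x := (1:ℝ))).sub h

theorem stmt2 (a b : ℝ) :
    ∫ x : ℝ, x * stdNormalCDF (a + b * x) * stdNormalPDF x =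
      (b / Real.sqrt (1 + b ^ 2)) * stdNormalPDF (a / Real.sqrt (1 + b ^ 2)) := by
  set c : ℝ := Real.sqrt (1 + b ^ 2) with hc_def
  have hc : 0 < c := Real.sqrt_pos.2 (by positivity)
  have hc2 : c ^ 2 = 1 + b ^ 2 := Real.sq_sqrt (by positivity)
  obtain ⟨K, hK_def⟩ : ∃ K : ℝ, K = stdNormalPDF (a / c) / c := ⟨_, rfl⟩
  obtain ⟨d, hd_def⟩ : ∃ d : ℝ, d = a * b / c := ⟨_, rfl⟩
  -- the key Gaussian product identity
  have key : ∀ x : ℝ, stdNormalPDF (a / c) * stdNormalPDF (c * x + d) =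
      stdNormalPDF (a + b * x) * stdNormalPDF x := by
    intro x
    obtain ⟨u, hu⟩ : ∃ u : ℝ, a = u * c := ⟨a / c, (div_mul_cancel₀ a hc.ne').symm⟩
    have hu' : a / c = u := by rw [hu]; field_simp
    have hd' : d = u * b := by rw [hd_def, hu]; field_simp
    rw [hu', hd', hu]
    simp only [stdNormalPDF, div_mul_div_comm, ← Real.exp_add]
    rw [Real.mul_self_sqrt (by positivity)]
    congr 1
    rw [Real.exp_eq_exp]
    linear_combination ((u ^ 2 - x ^ 2) / 2) * hc2
  -- the antiderivative
  set G : ℝ → ℝ := fun x =>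
    -(stdNormalCDF (a + b * x) * stdNormalPDF x) + b * K * stdNormalCDF (c * x + d) with hG_def
  have hG : ∀ x : ℝ, HasDerivAt G (x * stdNormalCDF (a + b * x) * stdNormalPDF x) x := by
    intro x
    have h1 : HasDerivAt (fun y : ℝ => stdNormalCDF (a + b * y))
        (stdNormalPDF (a + b * x) * b) x := by
      have hin : HasDerivAt (fun y : ℝ => a + b * y) b x := by
        simpa using ((hasDerivAt_id x).const_mul b).const_add a
      exact (hasDerivAt_cdf (a + b * x)).comp x hin
    have h2 := hasDerivAt_pdf x
    have h3 : HasDerivAt (fun y : ℝ => stdNormalCDF (c * y + d))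
        (stdNormalPDF (c * x + d) * c) x := by
      have hin : HasDerivAt (fun y : ℝ => c * y + d) c x := by
        simpa using ((hasDerivAt_id x).const_mul c).add_const d
      exact (hasDerivAt_cdf (c * x + d)).comp x hin
    have := ((h1.mul h2).neg).add ((h3.const_mul (b * K)))
    refine this.congr_deriv ?_
    have hKc : K * c = stdNormalPDF (a / c) := by
      rw [hK_def]; field_simp
    linear_combination b * key x + (b * stdNormalPDF (c * x + d)) * hKc
  -- integrability of the integrand
  have hcont : Continuous (fun x : ℝ => x * stdNormalCDF (a + b * x) * stdNormalPDF x) := by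
    exact (continuous_id.mul (cdf_continuous.comp (by continuity))).mul pdf_continuous
  have hint : Integrable (fun x : ℝ => x * stdNormalCDF (a + b * x) * stdNormalPDF x) := by
    have hg : Integrable (fun x : ℝ => x * stdNormalPDF x) := by
      rw [pdf_eq]
      simpa [div_eq_mul_inv, mul_assoc] using
        (integrable_mul_exp_neg_mul_sq (by norm_num : (0:ℝ) < 1/2)).div_const
          (Real.sqrt (2 * Real.pi))
    apply hg.mono hcont.aestronglyMeasurable
    filter_upwards with x
    simp only [Real.norm_eq_abs, abs_mul]
    rw [abs_of_nonneg (pdf_nonneg x), abs_of_nonneg (cdf_nonneg _)]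
    have h1 : stdNormalCDF (a + b * x) ≤ 1 := cdf_le_one _
    nlinarith [mul_nonneg (mul_nonneg (abs_nonneg x) (pdf_nonneg x)) (sub_nonneg.2 h1),
      mul_nonneg (abs_nonneg x) (pdf_nonneg x)]
  -- limits of G at ±∞
  have hΦφ_bound : ∀ x : ℝ, |stdNormalCDF (a + b * x) * stdNormalPDF x| ≤ stdNormalPDF x := by
    intro x
    rw [abs_mul, abs_of_nonneg (pdf_nonneg x), abs_of_nonneg (cdf_nonneg _)]
    nlinarith [pdf_nonneg x, cdf_le_one (a + b * x), cdf_nonneg (a + b * x)]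
  have hΦφ_top : Tendsto (fun x : ℝ => stdNormalCDF (a + b * x) * stdNormalPDF x) atTop (𝓝 0) := by
    apply squeeze_zero_norm (fun x => hΦφ_bound x) pdf_tendsto_atTop
  have hΦφ_bot : Tendsto (fun x : ℝ => stdNormalCDF (a + b * x) * stdNormalPDF x) atBot (𝓝 0) := by
    apply squeeze_zero_norm (fun x => hΦφ_bound x) pdf_tendsto_atBot
  have hlin_top : Tendsto (fun x : ℝ => c * x + d) atTop atTop :=
    (tendsto_id.const_mul_atTop hc).atTop_add tendsto_const_nhds
  have hlin_bot : Tendsto (fun x : ℝ => c * x + d) atBot atBot := by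
    apply Tendsto.atBot_add _ tendsto_const_nhds
    exact (tendsto_id (α := ℝ) (x := atBot)).const_mul_atBot hc
  have hG_top : Tendsto G atTop (𝓝 (b * K)) := by
    have := (hΦφ_top.neg).add ((cdf_tendsto_atTop.comp hlin_top).const_mul (b * K))
    simpa using this
  have hG_bot : Tendsto G atBot (𝓝 0) := by
    have := (hΦφ_bot.neg).add ((cdf_tendsto_atBot.comp hlin_bot).const_mul (b * K))
    simpa using this
  -- fundamental theorem of calculus on (-∞,0] and [0,∞)
  have hIic : ∫ x in Iic (0:ℝ), x * stdNormalCDF (a + b * x) * stdNormalPDF x = G 0 - 0 :=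
    integral_Iic_of_hasDerivAt_of_tendsto' (fun x _ => hG x) hint.integrableOn hG_bot
  have hIoi : ∫ x in Ioi (0:ℝ), x * stdNormalCDF (a + b * x) * stdNormalPDF x = b * K - G 0 :=
    integral_Ioi_of_hasDerivAt_of_tendsto' (fun x _ => hG x) hint.integrableOn hG_top
  rw [← intervalIntegral.integral_Iic_add_Ioi hint.integrableOn hint.integrableOn, hIic, hIoi, hK_def]
  ring
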